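/- arXiv:1304.0737 — 5 statements merged into one kernel-verified Lean document; each statement's English description precedes it below -/
import Mathlib

section
/- Let 𝔡 be a quadratic Lie algebra, 𝔠 ⊆ 𝔡 a coisotropic Lie subalgebra, and 𝔥 ⊆ 𝔡 a Lagrangian Lie subalgebra. Then 𝔥_𝔠 := ((𝔥 ∩ 𝔠) + 𝔠⊥)/𝔠⊥ is a Lagrangian Lie subalgebra of the reduced quadratic Lie algebra 𝔡_𝔠 = 𝔠/𝔠⊥: it is a Lie subalgebra of 𝔠/𝔠⊥ and it equals its own orthogonal complement with respect to the induced form. Equivalently, (𝔥 ∩ 𝔠) + 𝔠⊥ is a Lagrangian Lie subalgebra of 𝔡 containing 𝔠⊥. -/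
open LinearMap.BilinForm

lemma orth_sup {D : Type*} [AddCommGroup D] [Module ℝ D]
    (B : LinearMap.BilinForm ℝ D) (S T : Submodule ℝ D) :
    B.orthogonal (S ⊔ T) = B.orthogonal S ⊓ B.orthogonal T := by
  apply le_antisymm
  · exact le_inf (orthogonal_le le_sup_left) (orthogonal_le le_sup_right)
  · rintro x ⟨hxS, hxT⟩ n hn
    obtain ⟨s, hs, t, ht, rfl⟩ := Submodule.mem_sup.mp hn
    have := hxS s hs
    have := hxT t ht
    simp [*]

lemma orth_inf {D : Type*} [AddCommGroup D] [Module ℝ D] [FiniteDimensional ℝ D]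
    (B : LinearMap.BilinForm ℝ D) (hnondeg : B.Nondegenerate) (hrefl : B.IsRefl)
    (S T : Submodule ℝ D) :
    B.orthogonal (S ⊓ T) = B.orthogonal S ⊔ B.orthogonal T := by
  conv_lhs => rw [← B.orthogonal_orthogonal hnondeg hrefl S,
    ← B.orthogonal_orthogonal hnondeg hrefl T, ← orth_sup]
  exact B.orthogonal_orthogonal hnondeg hrefl _


/-- Let `𝔡` be a quadratic Lie algebra, `𝔠 ⊆ 𝔡` a coisotropic Lie subalgebra and
`𝔥 ⊆ 𝔡` a Lagrangian Lie subalgebra.  Then `(𝔥 ∩ 𝔠) + 𝔠⊥` is a Lagrangian Lie subalgebra of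
`𝔡` containing `𝔠⊥`; equivalently, `𝔥_𝔠 = ((𝔥 ∩ 𝔠) + 𝔠⊥)/𝔠⊥` is a Lagrangian Lie subalgebra
of the reduced quadratic Lie algebra `𝔡_𝔠 = 𝔠/𝔠⊥`. -/
theorem lagrangian_reduction
    {D : Type*} [LieRing D] [LieAlgebra ℝ D] [FiniteDimensional ℝ D]
    (B : LinearMap.BilinForm ℝ D) (hsymm : B.IsSymm) (hnondeg : B.Nondegenerate)
    (hinv : ∀ x y z : D, B ⁅x, y⁆ z + B y ⁅x, z⁆ = 0)
    (c h : LieSubalgebra ℝ D)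
    (hcois : B.orthogonal c.toSubmodule ≤ c.toSubmodule)
    (hlag : B.orthogonal h.toSubmodule = h.toSubmodule) :
    -- `(𝔥 ∩ 𝔠) + 𝔠⊥` is closed under the Lie bracket,
    (∀ x ∈ (h.toSubmodule ⊓ c.toSubmodule) ⊔ B.orthogonal c.toSubmodule,
      ∀ y ∈ (h.toSubmodule ⊓ c.toSubmodule) ⊔ B.orthogonal c.toSubmodule,
        ⁅x, y⁆ ∈ (h.toSubmodule ⊓ c.toSubmodule) ⊔ B.orthogonal c.toSubmodule) ∧
    -- it is Lagrangian,
    B.orthogonal ((h.toSubmodule ⊓ c.toSubmodule) ⊔ B.orthogonal c.toSubmodule)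
      = (h.toSubmodule ⊓ c.toSubmodule) ⊔ B.orthogonal c.toSubmodule ∧
    -- and it contains `𝔠⊥`.
    B.orthogonal c.toSubmodule
      ≤ (h.toSubmodule ⊓ c.toSubmodule) ⊔ B.orthogonal c.toSubmodule := by
  have hrefl : B.IsRefl := hsymm.isRefl
  -- c⊥ is an ideal of c
  have hideal : ∀ x ∈ c.toSubmodule, ∀ y ∈ B.orthogonal c.toSubmodule,
      ⁅x, y⁆ ∈ B.orthogonal c.toSubmodule := by
    intro x hx y hy n hn
    have h1 := hinv x n y
    have h2 : B ⁅x, n⁆ y = 0 := hy ⁅x, n⁆ (c.lie_mem hx hn)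
    linarith
  refine ⟨?_, ?_, le_sup_right⟩
  · intro x hx y hy
    obtain ⟨a, ha, u, hu, rfl⟩ := Submodule.mem_sup.mp hx
    obtain ⟨b, hb, v, hv, rfl⟩ := Submodule.mem_sup.mp hy
    have hab : ⁅a, b⁆ ∈ h.toSubmodule ⊓ c.toSubmodule :=
      ⟨h.lie_mem ha.1 hb.1, c.lie_mem ha.2 hb.2⟩
    have hav : ⁅a, v⁆ ∈ B.orthogonal c.toSubmodule := hideal a ha.2 v hv
    have hub : ⁅u, b⁆ ∈ B.orthogonal c.toSubmodule := by
      have := hideal b hb.2 u hu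
      have : (-⁅b, u⁆ : D) ∈ B.orthogonal c.toSubmodule := neg_mem this
      simpa [lie_skew] using this
    have huv : ⁅u, v⁆ ∈ B.orthogonal c.toSubmodule := hideal u (hcois hu) v hv
    have : ⁅a + u, b + v⁆ = ⁅a, b⁆ + ⁅a, v⁆ + (⁅u, b⁆ + ⁅u, v⁆) := by
      simp [lie_add, add_lie]; abel
    rw [this]
    exact add_mem (add_mem (Submodule.mem_sup_left hab) (Submodule.mem_sup_right hav))
      (add_mem (Submodule.mem_sup_right hub) (Submodule.mem_sup_right huv))
  · rw [orth_sup, orth_inf B hnondeg hrefl, hlag,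
      B.orthogonal_orthogonal hnondeg hrefl c.toSubmodule,
      sup_comm h.toSubmodule, sup_inf_assoc_of_le _ hcois, sup_comm]
end

section
/- Let 𝔡 be a quadratic Lie algebra, 𝔥 ⊆ 𝔡 a Lagrangian Lie subalgebra, and 𝔠 ⊆ 𝔡 a coisotropic Lie subalgebra; write 𝔥_𝔠 = ((𝔥 ∩ 𝔠) + 𝔠⊥)/𝔠⊥ ⊆ 𝔠/𝔠⊥. Suppose W ⊆ 𝔠/𝔠⊥ is a Lagrangian subspace with respect to the induced form such that W ⊕ 𝔥_𝔠 = 𝔠/𝔠⊥, and let 𝔨′ ⊆ 𝔠 be the preimage of W under the quotient map 𝔠 → 𝔠/𝔠⊥. Then: (a) 𝔨′ is a Lagrangian subspace of 𝔡, i.e. 𝔨′ = (𝔨′)⊥; (b) 𝔥 + 𝔨′ = 𝔥 + 𝔠; (c) 𝔥 ∩ 𝔨′ = 𝔥 ∩ 𝔠⊥. -/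
/-- The orthogonal complement of `𝔠`, regarded as a submodule of `𝔠`. -/
noncomputable def cperpIn {D : Type*} [LieRing D] [LieAlgebra ℝ D]
    (B : LinearMap.BilinForm ℝ D) (c : LieSubalgebra ℝ D) :
    Submodule ℝ c.toSubmodule :=
  (B.orthogonal c.toSubmodule).comap c.toSubmodule.subtype

/-- Let `𝔡` be a quadratic Lie algebra, `𝔥 ⊆ 𝔡` a Lagrangian Lie subalgebra and
`𝔠 ⊆ 𝔡` a coisotropic Lie subalgebra; let `B'` be the bilinear form induced on `𝔡_𝔠 = 𝔠/𝔠⊥`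
and `𝔥_𝔠 = ((𝔥 ∩ 𝔠) + 𝔠⊥)/𝔠⊥ ⊆ 𝔠/𝔠⊥`.  If `W ⊆ 𝔠/𝔠⊥` is a Lagrangian subspace with
`W ⊕ 𝔥_𝔠 = 𝔠/𝔠⊥` and `𝔨′ ⊆ 𝔠` is the preimage of `W` under `𝔠 → 𝔠/𝔠⊥`, then
(a) `𝔨′` is Lagrangian in `𝔡`; (b) `𝔥 + 𝔨′ = 𝔥 + 𝔠`; (c) `𝔥 ∩ 𝔨′ = 𝔥 ∩ 𝔠⊥`. -/
theorem lagrangian_complement_lift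
    {D : Type*} [LieRing D] [LieAlgebra ℝ D] [FiniteDimensional ℝ D]
    (B : LinearMap.BilinForm ℝ D) (hsymm : B.IsSymm) (hnondeg : B.Nondegenerate)
    (hinv : ∀ x y z : D, B ⁅x, y⁆ z + B y ⁅x, z⁆ = 0)
    (c h : LieSubalgebra ℝ D)
    (hcois : B.orthogonal c.toSubmodule ≤ c.toSubmodule)
    (hlag : B.orthogonal h.toSubmodule = h.toSubmodule)
    -- the induced bilinear form on the reduction 𝔡_𝔠 = 𝔠/𝔠⊥ :
    (B' : LinearMap.BilinForm ℝ (c.toSubmodule ⧸ cperpIn B c))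
    (hB' : ∀ x y : c.toSubmodule,
      B' (Submodule.Quotient.mk x) (Submodule.Quotient.mk y) = B (x : D) (y : D))
    -- a Lagrangian subspace `W` of the reduction, complementary to `𝔥_𝔠` :
    (W : Submodule ℝ (c.toSubmodule ⧸ cperpIn B c))
    (hWlag : B'.orthogonal W = W)
    (hcompl : IsCompl W
      (Submodule.map (cperpIn B c).mkQ
        ((h.toSubmodule ⊓ c.toSubmodule).comap c.toSubmodule.subtype))) :
    -- (a) the preimage `𝔨′` of `W` in `𝔠` is a Lagrangian subspace of `𝔡` :
    B.orthogonal
        (Submodule.map c.toSubmodule.subtype (W.comap (cperpIn B c).mkQ))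
      = Submodule.map c.toSubmodule.subtype (W.comap (cperpIn B c).mkQ) ∧
    -- (b) `𝔥 + 𝔨′ = 𝔥 + 𝔠` :
    h.toSubmodule ⊔ Submodule.map c.toSubmodule.subtype (W.comap (cperpIn B c).mkQ)
      = h.toSubmodule ⊔ c.toSubmodule ∧
    -- (c) `𝔥 ∩ 𝔨′ = 𝔥 ∩ 𝔠⊥` :
    h.toSubmodule ⊓ Submodule.map c.toSubmodule.subtype (W.comap (cperpIn B c).mkQ)
      = h.toSubmodule ⊓ B.orthogonal c.toSubmodule := by
  have hrefl : B.IsRefl := hsymm.isRefl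
  set K : Submodule ℝ D :=
    Submodule.map c.toSubmodule.subtype (W.comap (cperpIn B c).mkQ) with hK
  -- membership in K
  have memK : ∀ x : D, x ∈ K ↔
      ∃ y : c.toSubmodule, Submodule.Quotient.mk y ∈ W ∧ (y : D) = x := by
    intro x
    simp [hK, Submodule.mem_map, Submodule.mem_comap]
  -- K ≤ c
  have hKc : K ≤ c.toSubmodule := by
    intro x hx
    rcases (memK x).mp hx with ⟨y, _, rfl⟩
    exact y.2
  -- c⊥ ≤ K
  have hperpK : B.orthogonal c.toSubmodule ≤ K := by
    intro x hx
    refine (memK x).mpr ⟨⟨x, hcois hx⟩, ?_, rfl⟩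
    have : (⟨x, hcois hx⟩ : c.toSubmodule) ∈ cperpIn B c := hx
    rw [Submodule.Quotient.mk_eq_zero _ |>.mpr this]
    exact W.zero_mem
  -- pairs in K are orthogonal
  have hKortho : ∀ x ∈ K, ∀ y ∈ K, B x y = 0 := by
    intro x hx y hy
    rcases (memK x).mp hx with ⟨a, ha, rfl⟩
    rcases (memK y).mp hy with ⟨b, hb, rfl⟩
    have := hB' a b
    rw [← this]
    have hbW : (Submodule.Quotient.mk b : c.toSubmodule ⧸ cperpIn B c) ∈ B'.orthogonal W := by
      rw [hWlag]; exact hb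
    exact hbW _ ha
  constructor
  · -- (a)
    apply le_antisymm
    · -- orth K ≤ K
      intro x hx
      have hxc : x ∈ c.toSubmodule := by
        have h1 : B.orthogonal K ≤ B.orthogonal (B.orthogonal c.toSubmodule) :=
          LinearMap.BilinForm.orthogonal_le hperpK
        have h2 := LinearMap.BilinForm.orthogonal_orthogonal hnondeg hrefl c.toSubmodule
        exact h2 ▸ h1 hx
      refine (memK x).mpr ⟨⟨x, hxc⟩, ?_, rfl⟩
      rw [← hWlag]
      intro w hw
      obtain ⟨y, rfl⟩ := Submodule.Quotient.mk_surjective _ w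
      have hyK : (y : D) ∈ K := (memK _).mpr ⟨y, hw, rfl⟩
      have := hx _ hyK
      show B' _ _ = 0
      rw [hB']
      exact this
    · -- K ≤ orth K
      intro x hx n hn
      exact hKortho n hn x hx
  constructor
  · -- (b)
    apply le_antisymm
    · exact sup_le le_sup_left (le_trans hKc le_sup_right)
    · refine sup_le le_sup_left ?_
      intro x hx
      have hmem : (Submodule.Quotient.mk (⟨x, hx⟩ : c.toSubmodule) :
          c.toSubmodule ⧸ cperpIn B c) ∈ W ⊔
          (Submodule.map (cperpIn B c).mkQ
            ((h.toSubmodule ⊓ c.toSubmodule).comap c.toSubmodule.subtype)) := by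
        rw [hcompl.sup_eq_top]; trivial
      rcases Submodule.mem_sup.mp hmem with ⟨w, hw, z, hz, hwz⟩
      rcases Submodule.mem_map.mp hz with ⟨y, hy, rfl⟩
      have hyh : (y : D) ∈ h.toSubmodule := (Submodule.mem_comap.mp hy).1
      have hdiff : (x - (y : D)) ∈ K := by
        refine (memK _).mpr ⟨⟨x, hx⟩ - y, ?_, rfl⟩
        have : (Submodule.Quotient.mk ((⟨x, hx⟩ : c.toSubmodule) - y) :
            c.toSubmodule ⧸ cperpIn B c) = w := by
          rw [Submodule.Quotient.mk_sub]
          have : ((cperpIn B c).mkQ) y = Submodule.Quotient.mk y := rfl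
          rw [← hwz, ← this]
          abel
        rw [this]; exact hw
      have : x = (y : D) + (x - (y : D)) := by abel
      rw [this]
      exact Submodule.add_mem_sup hyh hdiff
  · -- (c)
    apply le_antisymm
    · rintro x ⟨hxh, hxK⟩
      rcases (memK x).mp hxK with ⟨y, hyW, rfl⟩
      have hyhc : (Submodule.Quotient.mk y : c.toSubmodule ⧸ cperpIn B c) ∈
          Submodule.map (cperpIn B c).mkQ
            ((h.toSubmodule ⊓ c.toSubmodule).comap c.toSubmodule.subtype) :=
        Submodule.mem_map.mpr ⟨y, Submodule.mem_comap.mpr ⟨hxh, y.2⟩, rfl⟩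
      have h0 : (Submodule.Quotient.mk y : c.toSubmodule ⧸ cperpIn B c) = 0 := by
        have := hcompl.inf_eq_bot
        have hmem : (Submodule.Quotient.mk y : c.toSubmodule ⧸ cperpIn B c) ∈
            W ⊓ Submodule.map (cperpIn B c).mkQ
              ((h.toSubmodule ⊓ c.toSubmodule).comap c.toSubmodule.subtype) := ⟨hyW, hyhc⟩
        rw [this] at hmem
        exact hmem
      have : y ∈ cperpIn B c := (Submodule.Quotient.mk_eq_zero _).mp h0
      exact ⟨hxh, this⟩
    · rintro x ⟨hxh, hxp⟩
      exact ⟨hxh, hperpK hxp⟩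
end

section
/- Let 𝔤 be a quadratic Lie algebra, let E and V be finite sets, let in, out : E → V be bijections, and let e₁ ≠ e₂ be two distinct elements of E. In the product quadratic Lie algebra (𝔤̄⊕𝔤)^E, let 𝔤_{Γ′} = { e ↦ (ξ_{in(e)}, ξ_{out(e)}) : ξ ∈ 𝔤^V } be the twisted diagonal and let 𝔠 = { z ∈ (𝔤̄⊕𝔤)^E : there exist ξ, η ∈ 𝔤 with z_{e₁} = (ξ,η) and z_{e₂} = (η,ξ) } be the sewing subalgebra. Then: (a) 𝔠 is a coisotropic Lie subalgebra of (𝔤̄⊕𝔤)^E whose orthogonal complement 𝔠⊥ consists of exactly those elements of 𝔠 whose components at all edges other than e₁ and e₂ vanish; (b) the coordinate projection π : (𝔤̄⊕𝔤)^E → (𝔤̄⊕𝔤)^{E∖{e₁,e₂}} induces an isomorphism of quadratic Lie algebras 𝔠/𝔠⊥ ≅ (𝔤̄⊕𝔤)^{E∖{e₁,e₂}}; (c) under this identification, the reduction ((𝔤_{Γ′} ∩ 𝔠) + 𝔠⊥)/𝔠⊥ corresponds to π(𝔤_{Γ′} ∩ 𝔠) = { e ↦ (ξ_{in(e)}, ξ_{out(e)})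 : ξ ∈ 𝔤^V with ξ_{in(e₁)} = ξ_{out(e₂)} and ξ_{in(e₂)} = ξ_{out(e₁)} }, i.e. to the twisted diagonal of the sewn graph. -/
section PiProdLie
variable {L M : Type*} [LieRing L] [LieRing M]

instance prodBracket : Bracket (L × M) (L × M) :=
  ⟨fun x y => (⁅x.1, y.1⁆, ⁅x.2, y.2⁆)⟩

instance prodLieRing : LieRing (L × M) where
  add_lie x y z := Prod.ext (add_lie x.1 y.1 z.1) (add_lie x.2 y.2 z.2)
  lie_add x y z := Prod.ext (lie_add x.1 y.1 z.1) (lie_add x.2 y.2 z.2)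
  lie_self x := Prod.ext (lie_self x.1) (lie_self x.2)
  leibniz_lie x y z := Prod.ext (leibniz_lie x.1 y.1 z.1) (leibniz_lie x.2 y.2 z.2)

instance prodLieAlgebra {R : Type*} [CommRing R] [LieAlgebra R L] [LieAlgebra R M] :
    LieAlgebra R (L × M) where
  lie_smul t x y := Prod.ext (lie_smul t x.1 y.1) (lie_smul t x.2 y.2)

variable {ι : Type*} {F : ι → Type*} [∀ i, LieRing (F i)]

instance piBracket : Bracket (∀ i, F i) (∀ i, F i) :=
  ⟨fun x y i => ⁅x i, y i⁆⟩

instance piLieRing : LieRing (∀ i, F i) where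
  add_lie x y z := funext fun i => add_lie (x i) (y i) (z i)
  lie_add x y z := funext fun i => lie_add (x i) (y i) (z i)
  lie_self x := funext fun i => lie_self (x i)
  leibniz_lie x y z := funext fun i => leibniz_lie (x i) (y i) (z i)

instance piLieAlgebra {R : Type*} [CommRing R] [∀ i, LieAlgebra R (F i)] :
    LieAlgebra R (∀ i, F i) where
  lie_smul t x y := funext fun i => lie_smul t (x i) (y i)

end PiProdLie

/-- The bilinear form of `𝔤̄ ⊕ 𝔤`: `⟨(x,y),(x′,y′)⟩ = −⟨x,x′⟩ + ⟨y,y′⟩`. -/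
noncomputable def barSumForm {g : Type*} [AddCommGroup g] [Module ℝ g]
    (B : LinearMap.BilinForm ℝ g) : LinearMap.BilinForm ℝ (g × g) :=
  B.compl₁₂ (LinearMap.snd ℝ g g) (LinearMap.snd ℝ g g)
    - B.compl₁₂ (LinearMap.fst ℝ g g) (LinearMap.fst ℝ g g)

/-- The bilinear form of `(𝔤̄ ⊕ 𝔤)^E`. -/
noncomputable def piBarSumForm {g : Type*} [AddCommGroup g] [Module ℝ g]
    (E : Type*) [Fintype E] (B : LinearMap.BilinForm ℝ g) :
    LinearMap.BilinForm ℝ (E → g × g) :=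
  ∑ e : E, (barSumForm B).compl₁₂
    (LinearMap.proj (R := ℝ) (φ := fun _ : E => g × g) e)
    (LinearMap.proj (R := ℝ) (φ := fun _ : E => g × g) e)

/-- The twisted diagonal `𝔤_Γ′ = { e ↦ (ξ (in e), ξ (out e)) : ξ ∈ 𝔤^V }`. -/
noncomputable def twistedDiagonal {g : Type*} [AddCommGroup g] [Module ℝ g]
    {E V : Type*} (inn out : E → V) : Submodule ℝ (E → g × g) :=
  LinearMap.range (LinearMap.pi fun e =>
    (LinearMap.proj (R := ℝ) (φ := fun _ : V => g) (inn e)).prod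
      (LinearMap.proj (R := ℝ) (φ := fun _ : V => g) (out e)))

/-- The sewing subalgebra
`𝔠 = { z : there are ξ, η with z e₁ = (ξ,η) and z e₂ = (η,ξ) }`, i.e. the kernel of
`z ↦ z e₂ − swap (z e₁)`. -/
noncomputable def sewSub (g : Type*) [AddCommGroup g] [Module ℝ g]
    {E : Type*} (e₁ e₂ : E) : Submodule ℝ (E → g × g) :=
  LinearMap.ker
    ((LinearMap.proj (R := ℝ) (φ := fun _ : E => g × g) e₂)
      - ((LinearMap.snd ℝ g g).prod (LinearMap.fst ℝ g g)).comp
          (LinearMap.proj (R := ℝ) (φ := fun _ : E => g × g) e₁))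

/-- The restriction map `(𝔤̄ ⊕ 𝔤)^E → (𝔤̄ ⊕ 𝔤)^{E ∖ {e₁,e₂}}`. -/
noncomputable def restrictProj (g : Type*) [AddCommGroup g] [Module ℝ g]
    {E : Type*} (e₁ e₂ : E) :
    (E → g × g) →ₗ[ℝ] ({e : E // e ≠ e₁ ∧ e ≠ e₂} → g × g) :=
  LinearMap.funLeft ℝ (g × g) Subtype.val


section Helpers
variable {g : Type*} [AddCommGroup g] [Module ℝ g]

lemma mem_sewSub {E : Type*} {e₁ e₂ : E} {z : E → g × g} :
    z ∈ sewSub g e₁ e₂ ↔ z e₂ = ((z e₁).2, (z e₁).1) := by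
  simp [sewSub, LinearMap.mem_ker, sub_eq_zero, Prod.ext_iff]

lemma piBarSumForm_apply {E : Type*} [Fintype E] (B : LinearMap.BilinForm ℝ g)
    (z w : E → g × g) :
    piBarSumForm E B z w = ∑ e : E, (B (z e).2 (w e).2 - B (z e).1 (w e).1) := by
  simp [piBarSumForm, barSumForm]

lemma restrictProj_apply {E : Type*} (e₁ e₂ : E) (z : E → g × g)
    (e' : {e : E // e ≠ e₁ ∧ e ≠ e₂}) :
    restrictProj g e₁ e₂ z e' = z e'.1 := rfl

lemma sum_split {E : Type*} [Fintype E] [DecidableEq E] (e₁ e₂ : E) (hne : e₁ ≠ e₂)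
    (f : E → ℝ) :
    ∑ e : E, f e = f e₁ + f e₂ + ∑ e : {e : E // e ≠ e₁ ∧ e ≠ e₂}, f e.1 := by
  rw [← Finset.sum_add_sum_compl ({e₁, e₂} : Finset E) f, Finset.sum_pair hne]
  congr 1
  exact Finset.sum_subtype _ (fun x => by simp [not_or]) f

lemma mem_twistedDiagonal {E V : Type*} (inn out : E → V) {z : E → g × g} :
    z ∈ twistedDiagonal (g := g) inn out ↔
      ∃ ξ : V → g, z = fun e => (ξ (inn e), ξ (out e)) := by
  constructor
  · rintro ⟨ξ, rfl⟩; exact ⟨ξ, rfl⟩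
  · rintro ⟨ξ, rfl⟩; exact ⟨ξ, rfl⟩

end Helpers

/-- sewing two edges of a permutation graph.  With `𝔠` the sewing subalgebra of
`(𝔤̄ ⊕ 𝔤)^E` and `𝔤_Γ′` the twisted diagonal of a permutation graph `(E,V,in,out)`:
(a) `𝔠` is a coisotropic Lie subalgebra whose orthogonal complement consists of exactly the
elements of `𝔠` vanishing at all edges other than `e₁, e₂`;
(b) the projection `π` induces an isomorphism of quadratic Lie algebras
`𝔠/𝔠⊥ ≅ (𝔤̄ ⊕ 𝔤)^{E∖{e₁,e₂}}`;
(c) the reduction `((𝔤_Γ′ ∩ 𝔠) + 𝔠⊥)/𝔠⊥` corresponds to `π(𝔤_Γ′ ∩ 𝔠)`, the twisted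
diagonal of the sewn graph. -/
theorem sewing_reduction
    {g : Type*} [LieRing g] [LieAlgebra ℝ g] [FiniteDimensional ℝ g]
    (B : LinearMap.BilinForm ℝ g) (hsymm : B.IsSymm) (hnondeg : B.Nondegenerate)
    (hinv : ∀ x y z : g, B ⁅x, y⁆ z + B y ⁅x, z⁆ = 0)
    {E V : Type*} [Fintype E] [Fintype V] [DecidableEq E]
    (inn out : E → V) (hin : Function.Bijective inn) (hout : Function.Bijective out)
    (e₁ e₂ : E) (hne : e₁ ≠ e₂) :
    -- (a) `𝔠` is a Lie subalgebra,
    (∀ z ∈ sewSub g e₁ e₂, ∀ w ∈ sewSub g e₁ e₂, ⁅z, w⁆ ∈ sewSub g e₁ e₂) ∧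
    -- coisotropic, with `𝔠⊥ = 𝔠 ∩ ker π` (elements supported on `{e₁, e₂}`):
    (piBarSumForm E B).orthogonal (sewSub g e₁ e₂)
      = sewSub g e₁ e₂ ⊓ LinearMap.ker (restrictProj g e₁ e₂) ∧
    -- (b) `π` restricted to `𝔠` is surjective, preserves brackets, and preserves the forms
    -- on `𝔠` (together with (a), whose kernel statement it complements, this says that `π`
    -- induces an isomorphism of quadratic Lie algebras `𝔠/𝔠⊥ ≅ (𝔤̄⊕𝔤)^{E∖{e₁,e₂}}`):
    Submodule.map (restrictProj g e₁ e₂) (sewSub g e₁ e₂) = ⊤ ∧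
    (∀ z w : E → g × g,
      restrictProj g e₁ e₂ ⁅z, w⁆ = ⁅restrictProj g e₁ e₂ z, restrictProj g e₁ e₂ w⁆) ∧
    (∀ z ∈ sewSub g e₁ e₂, ∀ w ∈ sewSub g e₁ e₂,
      piBarSumForm E B z w
        = piBarSumForm {e : E // e ≠ e₁ ∧ e ≠ e₂} B
            (restrictProj g e₁ e₂ z) (restrictProj g e₁ e₂ w)) ∧
    -- (c) under this identification the reduction of the twisted diagonal is `π(𝔤_Γ′ ∩ 𝔠)`,
    Submodule.map (restrictProj g e₁ e₂)
        ((twistedDiagonal (g := g) inn out ⊓ sewSub g e₁ e₂)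
          ⊔ (piBarSumForm E B).orthogonal (sewSub g e₁ e₂))
      = Submodule.map (restrictProj g e₁ e₂)
          (twistedDiagonal (g := g) inn out ⊓ sewSub g e₁ e₂) ∧
    -- which is exactly the twisted diagonal of the sewn graph:
    (Submodule.map (restrictProj g e₁ e₂)
          (twistedDiagonal (g := g) inn out ⊓ sewSub g e₁ e₂) : Set _)
      = { w : {e : E // e ≠ e₁ ∧ e ≠ e₂} → g × g |
          ∃ ξ : V → g, ξ (inn e₁) = ξ (out e₂) ∧ ξ (inn e₂) = ξ (out e₁) ∧
            ∀ e' : {e : E // e ≠ e₁ ∧ e ≠ e₂},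
              w e' = (ξ (inn e'.1), ξ (out e'.1)) } := by
  have hzero : ∀ x : g, (∀ a : g, B a x = 0) → x = 0 := by
    intro x h
    refine hnondeg.1 x (fun n => ?_)
    have := hsymm.eq x n
    rw [this, h]
  have hA : ∀ z ∈ sewSub g e₁ e₂, ∀ w ∈ sewSub g e₁ e₂, ⁅z, w⁆ ∈ sewSub g e₁ e₂ := by
    intro z hz w hw
    rw [mem_sewSub] at hz hw ⊢
    show (⁅(z e₂).1, (w e₂).1⁆, ⁅(z e₂).2, (w e₂).2⁆) = _
    rw [hz, hw]
    rfl
  have hmem1 : ∀ (e : E), e ≠ e₁ → e ≠ e₂ → ∀ (v : g × g),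
      Pi.single e v ∈ sewSub g e₁ e₂ := by
    intro e he1 he2 v
    rw [mem_sewSub, Pi.single_eq_of_ne (Ne.symm he2), Pi.single_eq_of_ne (Ne.symm he1)]
    simp
    rfl
  have hform_single : ∀ (e₀ : E) (v : g × g) (z : E → g × g),
      piBarSumForm E B (Pi.single e₀ v) z = B v.2 (z e₀).2 - B v.1 (z e₀).1 := by
    intro e₀ v z
    rw [piBarSumForm_apply, Finset.sum_eq_single e₀]
    · rw [Pi.single_eq_same]
    · intro b _ hb
      rw [Pi.single_eq_of_ne hb]
      simp
    · simp
  have hmem2 : ∀ a b : g,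
      (Pi.single e₁ (a, b) + Pi.single e₂ (b, a) : E → g × g) ∈ sewSub g e₁ e₂ := by
    intro a b
    rw [mem_sewSub]
    simp [Pi.single_eq_of_ne hne, Pi.single_eq_of_ne hne.symm]
  have hOrth : (piBarSumForm E B).orthogonal (sewSub g e₁ e₂)
      = sewSub g e₁ e₂ ⊓ LinearMap.ker (restrictProj g e₁ e₂) := by
    ext z
    rw [LinearMap.BilinForm.mem_orthogonal_iff, Submodule.mem_inf]
    constructor
    · intro hz
      have hsupp : ∀ e : E, e ≠ e₁ → e ≠ e₂ → z e = 0 := by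
        intro e he1 he2
        have h1 : ∀ a : g, B a (z e).1 = 0 := by
          intro a
          have h0 := hz _ (hmem1 e he1 he2 (a, 0))
          rw [hform_single] at h0
          simp only [map_zero, LinearMap.zero_apply] at h0
          linarith
        have h2 : ∀ b : g, B b (z e).2 = 0 := by
          intro b
          have h0 := hz _ (hmem1 e he1 he2 (0, b))
          rw [hform_single] at h0
          simp only [map_zero, LinearMap.zero_apply] at h0
          linarith
        have e1 : (z e).1 = 0 := hzero _ h1
        have e2 : (z e).2 = 0 := hzero _ h2
        exact Prod.ext e1 e2
      have key : ∀ a b : g,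
          (B b (z e₁).2 - B a (z e₁).1) + (B a (z e₂).2 - B b (z e₂).1) = 0 := by
        intro a b
        have h0 := hz _ (hmem2 a b)
        rw [map_add, LinearMap.add_apply, hform_single,
          hform_single] at h0
        exact h0
      have k1 : (z e₂).2 = (z e₁).1 := by
        refine sub_eq_zero.mp (hzero _ (fun a => ?_))
        have h0 := key a 0
        simp only [map_zero, LinearMap.zero_apply] at h0
        rw [map_sub]
        linarith
      have k2 : (z e₂).1 = (z e₁).2 := by
        refine (sub_eq_zero.mp (hzero _ (fun b => ?_))).symm
        have h0 := key 0 b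
        simp only [map_zero, LinearMap.zero_apply] at h0
        rw [map_sub]
        linarith
      refine ⟨mem_sewSub.mpr (Prod.ext k2 k1), ?_⟩
      exact LinearMap.mem_ker.mpr (funext fun e' => hsupp e'.1 e'.2.1 e'.2.2)
    · rintro ⟨hzc, hzk⟩ w hw
      have hz0 : ∀ e' : {e : E // e ≠ e₁ ∧ e ≠ e₂}, z e'.1 = 0 :=
        fun e' => congrFun (LinearMap.mem_ker.mp hzk) e'
      rw [mem_sewSub] at hzc hw
      rw [piBarSumForm_apply, sum_split e₁ e₂ hne]
      have hS : ∑ e : {e : E // e ≠ e₁ ∧ e ≠ e₂},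
          (B (w e.1).2 (z e.1).2 - B (w e.1).1 (z e.1).1) = 0 := by
        apply Finset.sum_eq_zero
        intro e' _
        rw [hz0 e']
        simp
      rw [hS, hzc, hw]
      simp
  have hSurj : Submodule.map (restrictProj g e₁ e₂) (sewSub g e₁ e₂) = ⊤ := by
    rw [Submodule.eq_top_iff']
    intro w
    refine Submodule.mem_map.mpr ⟨fun e => if h : e ≠ e₁ ∧ e ≠ e₂ then w ⟨e, h⟩ else 0, ?_, ?_⟩
    · rw [mem_sewSub]
      simp [hne, hne.symm]
      rfl
    · funext e'
      show (if h : e'.1 ≠ e₁ ∧ e'.1 ≠ e₂ then w ⟨e'.1, h⟩ else 0) = w e'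
      rw [dif_pos e'.2]
  have hForm : ∀ z ∈ sewSub g e₁ e₂, ∀ w ∈ sewSub g e₁ e₂,
      piBarSumForm E B z w
        = piBarSumForm {e : E // e ≠ e₁ ∧ e ≠ e₂} B
            (restrictProj g e₁ e₂ z) (restrictProj g e₁ e₂ w) := by
    intro z hz w hw
    rw [mem_sewSub] at hz hw
    rw [piBarSumForm_apply, piBarSumForm_apply, sum_split e₁ e₂ hne, hz, hw]
    simp only [restrictProj_apply]
    ring
  have hC1 : Submodule.map (restrictProj g e₁ e₂)
        ((twistedDiagonal (g := g) inn out ⊓ sewSub g e₁ e₂)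
          ⊔ (piBarSumForm E B).orthogonal (sewSub g e₁ e₂))
      = Submodule.map (restrictProj g e₁ e₂)
          (twistedDiagonal (g := g) inn out ⊓ sewSub g e₁ e₂) := by
    rw [hOrth, Submodule.map_sup]
    have h2 : Submodule.map (restrictProj g e₁ e₂)
        (sewSub g e₁ e₂ ⊓ LinearMap.ker (restrictProj g e₁ e₂)) = ⊥ := by
      rw [Submodule.eq_bot_iff]
      rintro x ⟨y, ⟨-, hy⟩, rfl⟩
      exact hy
    rw [h2, sup_bot_eq]
  have hC2 : (Submodule.map (restrictProj g e₁ e₂)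
          (twistedDiagonal (g := g) inn out ⊓ sewSub g e₁ e₂) : Set _)
      = { w : {e : E // e ≠ e₁ ∧ e ≠ e₂} → g × g |
          ∃ ξ : V → g, ξ (inn e₁) = ξ (out e₂) ∧ ξ (inn e₂) = ξ (out e₁) ∧
            ∀ e' : {e : E // e ≠ e₁ ∧ e ≠ e₂},
              w e' = (ξ (inn e'.1), ξ (out e'.1)) } := by
    ext w
    simp only [SetLike.mem_coe, Submodule.mem_map, Submodule.mem_inf, Set.mem_setOf_eq]
    constructor
    · rintro ⟨z, ⟨hzd, hzc⟩, rfl⟩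
      rw [mem_twistedDiagonal] at hzd
      obtain ⟨ξ, rfl⟩ := hzd
      rw [mem_sewSub] at hzc
      have h1 : ξ (inn e₂) = ξ (out e₁) := congrArg Prod.fst hzc
      have h2 : ξ (out e₂) = ξ (inn e₁) := congrArg Prod.snd hzc
      exact ⟨ξ, h2.symm, h1, fun e' => rfl⟩
    · rintro ⟨ξ, h1, h2, hw⟩
      refine ⟨fun e => (ξ (inn e), ξ (out e)), ⟨⟨ξ, rfl⟩, ?_⟩, ?_⟩
      · rw [mem_sewSub]
        exact Prod.ext h2 h1.symm
      · funext e'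
        exact (hw e').symm
  exact ⟨hA, hOrth, hSurj, fun z w => rfl, hForm, hC1, hC2⟩
end

section
/- Let 𝔡 be a quadratic Lie algebra and let 𝔠₁, 𝔠₂ ⊆ 𝔡 be coisotropic Lie subalgebras such that 𝔠₁ ∩ 𝔠₂ is also a coisotropic subalgebra. Then: (a) 𝔠₁⊥ ⊆ (𝔠₁ ∩ 𝔠₂)⊥ ⊆ 𝔠₁ ∩ 𝔠₂ ⊆ 𝔠₂; (b) 𝔠_{2,1} := ((𝔠₁ ∩ 𝔠₂) + 𝔠₁⊥)/𝔠₁⊥ is a coisotropic Lie subalgebra of the reduced quadratic Lie algebra 𝔡_{𝔠₁} = 𝔠₁/𝔠₁⊥ whose orthogonal complement in 𝔡_{𝔠₁} equals (𝔠₁⊥ + 𝔠₂⊥)/𝔠₁⊥; (c) the assignment x ↦ ((x + 𝔠₁⊥) + (𝔠_{2,1})⊥) induces an isomorphism of quadratic Lie algebras from (𝔠₁ ∩ 𝔠₂)/(𝔠₁ ∩ 𝔠₂)⊥ onto 𝔠_{2,1}/(𝔠_{2,1})⊥, preserving both the Lie brackets and the induced bilinear forms. In other words, reducing 𝔡 by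 𝔠₁ and then reducing the result by 𝔠_{2,1} agrees with reducing 𝔡 by 𝔠₁ ∩ 𝔠₂. -/
variable {D : Type*} [LieRing D] [LieAlgebra ℝ D]

/-- The orthogonal complement of `𝔠`, regarded as a submodule of `𝔠`. -/
noncomputable def perpIn (B : LinearMap.BilinForm ℝ D) (c : LieSubalgebra ℝ D) :
    Submodule ℝ c.toSubmodule :=
  (B.orthogonal c.toSubmodule).comap c.toSubmodule.subtype

/-- The reduction `𝔡_𝔠 = 𝔠/𝔠⊥` of `𝔡` by a coisotropic subalgebra `𝔠`. -/
noncomputable abbrev Reduction (B : LinearMap.BilinForm ℝ D) (c : LieSubalgebra ℝ D) :=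
  c.toSubmodule ⧸ perpIn B c

/-- `𝔠_{2,1} = ((𝔠₁ ∩ 𝔠₂) + 𝔠₁⊥)/𝔠₁⊥`, as a submodule of the reduction `𝔡_{𝔠₁}`. -/
noncomputable def cTwoOne (B : LinearMap.BilinForm ℝ D) (c₁ c₂ : LieSubalgebra ℝ D) :
    Submodule ℝ (Reduction B c₁) :=
  Submodule.map (perpIn B c₁).mkQ
    ((c₁.toSubmodule ⊓ c₂.toSubmodule).comap c₁.toSubmodule.subtype)

/-- The second reduction `(𝔡_{𝔠₁})_{𝔠_{2,1}} = 𝔠_{2,1}/(𝔠_{2,1})⊥`, where `B₁` is the form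
induced on `𝔡_{𝔠₁}`. -/
noncomputable abbrev SecondReduction (B : LinearMap.BilinForm ℝ D)
    (c₁ c₂ : LieSubalgebra ℝ D) (B₁ : LinearMap.BilinForm ℝ (Reduction B c₁)) :=
  cTwoOne B c₁ c₂ ⧸ (B₁.orthogonal (cTwoOne B c₁ c₂)).comap (cTwoOne B c₁ c₂).subtype

/-- The canonical map `𝔠₁ ∩ 𝔠₂ → (𝔡_{𝔠₁})_{𝔠_{2,1}}`,
`x ↦ ((x + 𝔠₁⊥) + (𝔠_{2,1})⊥)`. -/
noncomputable def doubleRed (B : LinearMap.BilinForm ℝ D) (c₁ c₂ : LieSubalgebra ℝ D)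
    (B₁ : LinearMap.BilinForm ℝ (Reduction B c₁)) :
    (c₁.toSubmodule ⊓ c₂.toSubmodule : Submodule ℝ D) →ₗ[ℝ]
      SecondReduction B c₁ c₂ B₁ :=
  ((B₁.orthogonal (cTwoOne B c₁ c₂)).comap (cTwoOne B c₁ c₂).subtype).mkQ.comp
    (LinearMap.codRestrict (cTwoOne B c₁ c₂)
      ((perpIn B c₁).mkQ.comp (Submodule.inclusion inf_le_left))
      (fun x => Submodule.mem_map_of_mem (by exact x.2)))

lemma orth_sup_eq (B : LinearMap.BilinForm ℝ D) (N L : Submodule ℝ D) :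
    B.orthogonal (N ⊔ L) = B.orthogonal N ⊓ B.orthogonal L := by
  refine le_antisymm (le_inf (B.orthogonal_le le_sup_left) (B.orthogonal_le le_sup_right)) ?_
  rintro x ⟨hx1, hx2⟩ n hn
  obtain ⟨a, ha, b, hb, rfl⟩ := Submodule.mem_sup.mp hn
  show B (a + b) x = 0
  rw [map_add, LinearMap.add_apply, hx1 a ha, hx2 b hb, add_zero]

lemma orth_inf_eq [FiniteDimensional ℝ D] (B : LinearMap.BilinForm ℝ D)
    (hn : B.Nondegenerate) (hr : B.IsRefl) (N L : Submodule ℝ D) :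
    B.orthogonal (N ⊓ L) = B.orthogonal N ⊔ B.orthogonal L := by
  have h : N ⊓ L = B.orthogonal (B.orthogonal N ⊔ B.orthogonal L) := by
    rw [orth_sup_eq, B.orthogonal_orthogonal hn hr, B.orthogonal_orthogonal hn hr]
  rw [h, B.orthogonal_orthogonal hn hr]

/-- Let `𝔠₁, 𝔠₂` be coisotropic Lie subalgebras of a quadratic Lie algebra `𝔡`
such that `𝔠₁ ∩ 𝔠₂` is coisotropic, and let `B₁` be the form induced on `𝔡_{𝔠₁} = 𝔠₁/𝔠₁⊥`
and `B₂` the form induced on `(𝔡_{𝔠₁})_{𝔠_{2,1}} = 𝔠_{2,1}/(𝔠_{2,1})⊥`.  Then: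
(a) `𝔠₁⊥ ⊆ (𝔠₁ ∩ 𝔠₂)⊥ ⊆ 𝔠₁ ∩ 𝔠₂ ⊆ 𝔠₂`;
(b) `𝔠_{2,1} = ((𝔠₁ ∩ 𝔠₂) + 𝔠₁⊥)/𝔠₁⊥` is a coisotropic Lie subalgebra of `𝔡_{𝔠₁}` whose
orthogonal complement equals `(𝔠₁⊥ + 𝔠₂⊥)/𝔠₁⊥`;
(c) `x ↦ ((x + 𝔠₁⊥) + (𝔠_{2,1})⊥)` induces an isomorphism of quadratic Lie algebras
`(𝔠₁ ∩ 𝔠₂)/(𝔠₁ ∩ 𝔠₂)⊥ ≅ 𝔠_{2,1}/(𝔠_{2,1})⊥`, preserving the brackets and the forms. -/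
theorem commutativity_of_reductions
    [FiniteDimensional ℝ D]
    (B : LinearMap.BilinForm ℝ D) (hsymm : B.IsSymm) (hnondeg : B.Nondegenerate)
    (hinv : ∀ x y z : D, B ⁅x, y⁆ z + B y ⁅x, z⁆ = 0)
    (c₁ c₂ : LieSubalgebra ℝ D)
    (hc₁ : B.orthogonal c₁.toSubmodule ≤ c₁.toSubmodule)
    (hc₂ : B.orthogonal c₂.toSubmodule ≤ c₂.toSubmodule)
    (hc₁₂ : B.orthogonal (c₁.toSubmodule ⊓ c₂.toSubmodule)
      ≤ c₁.toSubmodule ⊓ c₂.toSubmodule)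
    -- the bilinear form induced on `𝔡_{𝔠₁}` :
    (B₁ : LinearMap.BilinForm ℝ (Reduction B c₁))
    (hB₁ : ∀ x y : c₁.toSubmodule,
      B₁ (Submodule.Quotient.mk x) (Submodule.Quotient.mk y) = B (x : D) (y : D))
    -- the bilinear form induced on the second reduction `𝔠_{2,1}/(𝔠_{2,1})⊥` :
    (B₂ : LinearMap.BilinForm ℝ (SecondReduction B c₁ c₂ B₁))
    (hB₂ : ∀ u v : cTwoOne B c₁ c₂,
      B₂ (Submodule.Quotient.mk u) (Submodule.Quotient.mk v) = B₁ (u : Reduction B c₁) v) :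
    -- (a) the chain of inclusions:
    (B.orthogonal c₁.toSubmodule ≤ B.orthogonal (c₁.toSubmodule ⊓ c₂.toSubmodule) ∧
      B.orthogonal (c₁.toSubmodule ⊓ c₂.toSubmodule) ≤ c₁.toSubmodule ⊓ c₂.toSubmodule ∧
      c₁.toSubmodule ⊓ c₂.toSubmodule ≤ c₂.toSubmodule) ∧
    -- (b) `(𝔠₁ ∩ 𝔠₂) + 𝔠₁⊥` is closed under the bracket (so `𝔠_{2,1}` is a Lie subalgebra
    -- of the reduced Lie algebra `𝔡_{𝔠₁}`),
    ((∀ x ∈ (c₁.toSubmodule ⊓ c₂.toSubmodule) ⊔ B.orthogonal c₁.toSubmodule,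
        ∀ y ∈ (c₁.toSubmodule ⊓ c₂.toSubmodule) ⊔ B.orthogonal c₁.toSubmodule,
          ⁅x, y⁆ ∈ (c₁.toSubmodule ⊓ c₂.toSubmodule) ⊔ B.orthogonal c₁.toSubmodule) ∧
      -- `𝔠_{2,1}` is coisotropic in `𝔡_{𝔠₁}`, with orthogonal `(𝔠₁⊥ + 𝔠₂⊥)/𝔠₁⊥`:
      B₁.orthogonal (cTwoOne B c₁ c₂) ≤ cTwoOne B c₁ c₂ ∧
      B₁.orthogonal (cTwoOne B c₁ c₂)
        = Submodule.map (perpIn B c₁).mkQ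
            ((B.orthogonal c₁.toSubmodule ⊔ B.orthogonal c₂.toSubmodule).comap
              c₁.toSubmodule.subtype)) ∧
    -- (c) `x ↦ ((x + 𝔠₁⊥) + (𝔠_{2,1})⊥)` induces an isomorphism of quadratic Lie algebras
    -- `(𝔠₁ ∩ 𝔠₂)/(𝔠₁ ∩ 𝔠₂)⊥ ≅ 𝔠_{2,1}/(𝔠_{2,1})⊥`: it is surjective, its kernel is
    -- `(𝔠₁ ∩ 𝔠₂)⊥`, it intertwines the forms, and the bracket descends along it:
    (Function.Surjective (doubleRed B c₁ c₂ B₁) ∧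
      LinearMap.ker (doubleRed B c₁ c₂ B₁)
        = (B.orthogonal (c₁.toSubmodule ⊓ c₂.toSubmodule)).comap
            (c₁.toSubmodule ⊓ c₂.toSubmodule).subtype ∧
      (∀ x y : (c₁.toSubmodule ⊓ c₂.toSubmodule : Submodule ℝ D),
        B₂ (doubleRed B c₁ c₂ B₁ x) (doubleRed B c₁ c₂ B₁ y) = B (x : D) (y : D)) ∧
      (∀ x y x' y' : (c₁.toSubmodule ⊓ c₂.toSubmodule : Submodule ℝ D),
        doubleRed B c₁ c₂ B₁ x = doubleRed B c₁ c₂ B₁ x' →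
        doubleRed B c₁ c₂ B₁ y = doubleRed B c₁ c₂ B₁ y' →
        doubleRed B c₁ c₂ B₁
            ⟨⁅(x : D), (y : D)⁆, Submodule.mem_inf.mpr
              ⟨c₁.lie_mem (Submodule.mem_inf.mp x.2).1 (Submodule.mem_inf.mp y.2).1,
               c₂.lie_mem (Submodule.mem_inf.mp x.2).2 (Submodule.mem_inf.mp y.2).2⟩⟩
          = doubleRed B c₁ c₂ B₁
            ⟨⁅(x' : D), (y' : D)⁆, Submodule.mem_inf.mpr
              ⟨c₁.lie_mem (Submodule.mem_inf.mp x'.2).1 (Submodule.mem_inf.mp y'.2).1,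
               c₂.lie_mem (Submodule.mem_inf.mp x'.2).2 (Submodule.mem_inf.mp y'.2).2⟩⟩)) := by
  have hrefl : B.IsRefl := hsymm.isRefl
  set K₁ := B.orthogonal c₁.toSubmodule with hK₁
  set K₂ := B.orthogonal c₂.toSubmodule with hK₂
  set I := c₁.toSubmodule ⊓ c₂.toSubmodule with hI
  -- closure of I under brackets
  have hIlie : ∀ u ∈ I, ∀ n ∈ I, ⁅u, n⁆ ∈ I := by
    intro u hu n hn
    exact Submodule.mem_inf.mpr ⟨c₁.lie_mem (Submodule.mem_inf.mp hu).1 (Submodule.mem_inf.mp hn).1,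
      c₂.lie_mem (Submodule.mem_inf.mp hu).2 (Submodule.mem_inf.mp hn).2⟩
  -- bracket of a subalgebra with its orthogonal lands in the orthogonal
  have lieOrth : ∀ S : Submodule ℝ D, (∀ u ∈ S, ∀ n ∈ S, ⁅u, n⁆ ∈ S) →
      ∀ u ∈ S, ∀ p ∈ B.orthogonal S, ⁅u, p⁆ ∈ B.orthogonal S := by
    intro S hS u hu p hp n hn
    show B n ⁅u, p⁆ = 0
    have h1 : B ⁅u, p⁆ n + B p ⁅u, n⁆ = 0 := hinv u p n
    have h2 : B p ⁅u, n⁆ = 0 := by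
      have := hp ⁅u, n⁆ (hS u hu n hn)
      have hs : B p ⁅u, n⁆ = B ⁅u, n⁆ p := hsymm.eq p ⁅u, n⁆
      rw [hs]; exact this
    have h3 : B n ⁅u, p⁆ = B ⁅u, p⁆ n := hsymm.eq n ⁅u, p⁆
    rw [h3]; linarith
  -- (a)
  have ha1 : B.orthogonal c₁.toSubmodule ≤ B.orthogonal I := B.orthogonal_le inf_le_left
  have ha2' : B.orthogonal I ≤ I := hc₁₂
  have hKI : K₁ ⊔ K₂ ≤ B.orthogonal I :=
    sup_le (B.orthogonal_le inf_le_left) (B.orthogonal_le inf_le_right)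
  have horthI : B.orthogonal I = K₁ ⊔ K₂ := orth_inf_eq B hnondeg hrefl _ _
  -- key characterization of the orthogonal of cTwoOne
  have key : ∀ w : c₁.toSubmodule,
      ((perpIn B c₁).mkQ w ∈ B₁.orthogonal (cTwoOne B c₁ c₂) ↔ (w : D) ∈ B.orthogonal I) := by
    intro w
    constructor
    · intro h n hn
      have hn1 : n ∈ c₁.toSubmodule := hn.1
      have hmem : (perpIn B c₁).mkQ ⟨n, hn1⟩ ∈ cTwoOne B c₁ c₂ :=
        ⟨⟨n, hn1⟩, hn, rfl⟩
      have := h _ hmem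
      show B n (w : D) = 0
      rw [← hB₁ ⟨n, hn1⟩ w]
      exact this
    · intro hw u hu
      obtain ⟨x, hx, rfl⟩ := hu
      show B₁ ((perpIn B c₁).mkQ x) ((perpIn B c₁).mkQ w) = 0
      rw [Submodule.mkQ_apply, Submodule.mkQ_apply, hB₁]
      exact hw (x : D) hx
  -- (b3)
  have hb3 : B₁.orthogonal (cTwoOne B c₁ c₂)
      = Submodule.map (perpIn B c₁).mkQ ((K₁ ⊔ K₂).comap c₁.toSubmodule.subtype) := by
    ext v
    constructor
    · intro hv
      obtain ⟨w, rfl⟩ := Submodule.mkQ_surjective _ v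
      have hw : (w : D) ∈ K₁ ⊔ K₂ := horthI ▸ (key w).mp hv
      exact ⟨w, hw, rfl⟩
    · rintro ⟨w, hw, rfl⟩
      exact (key w).mpr (hKI hw)
  -- (b2)
  have hb2 : B₁.orthogonal (cTwoOne B c₁ c₂) ≤ cTwoOne B c₁ c₂ := by
    rw [hb3]
    rintro v ⟨w, hw, rfl⟩
    exact ⟨w, hc₁₂ (hKI hw), rfl⟩
  -- (b1)
  have hb1 : ∀ x ∈ I ⊔ K₁, ∀ y ∈ I ⊔ K₁, ⁅x, y⁆ ∈ I ⊔ K₁ := by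
    intro x hx y hy
    obtain ⟨a, ha, p, hp, rfl⟩ := Submodule.mem_sup.mp hx
    obtain ⟨b, hb, q, hq, rfl⟩ := Submodule.mem_sup.mp hy
    have hac₁ : a ∈ c₁.toSubmodule := ha.1
    have hbc₁ : b ∈ c₁.toSubmodule := hb.1
    have hpc₁ : p ∈ c₁.toSubmodule := hc₁ hp
    have hc₁lie : ∀ u ∈ c₁.toSubmodule, ∀ n ∈ c₁.toSubmodule, ⁅u, n⁆ ∈ c₁.toSubmodule :=
      fun u hu n hn => c₁.lie_mem hu hn
    have h1 : ⁅a, b⁆ ∈ I ⊔ K₁ := Submodule.mem_sup_left (hIlie a ha b hb)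
    have h2 : ⁅a, q⁆ ∈ I ⊔ K₁ :=
      Submodule.mem_sup_right (lieOrth _ hc₁lie a hac₁ q hq)
    have h3 : ⁅p, b⁆ ∈ I ⊔ K₁ := by
      have h : ⁅b, p⁆ ∈ K₁ := lieOrth _ hc₁lie b hbc₁ p hp
      rw [← lie_skew]
      exact Submodule.mem_sup_right (neg_mem h)
    have h4 : ⁅p, q⁆ ∈ I ⊔ K₁ :=
      Submodule.mem_sup_right (lieOrth _ hc₁lie p hpc₁ q hq)
    simp only [lie_add, add_lie]
    exact add_mem (add_mem h1 h3) (add_mem h2 h4)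
  -- kernel of doubleRed
  have hker : LinearMap.ker (doubleRed B c₁ c₂ B₁)
      = (B.orthogonal I).comap I.subtype := by
    ext x
    simp only [LinearMap.mem_ker, doubleRed, LinearMap.coe_comp, Function.comp_apply,
      Submodule.mkQ_apply, Submodule.Quotient.mk_eq_zero, Submodule.mem_comap,
      LinearMap.codRestrict_apply]
    constructor
    · intro h
      exact (key _).mp h
    · intro h
      exact (key _).mpr h
  -- surjectivity
  have hsurj : Function.Surjective (doubleRed B c₁ c₂ B₁) := by
    intro v
    obtain ⟨u, rfl⟩ := Submodule.mkQ_surjective _ v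
    obtain ⟨x, hx, hxu⟩ := u.2
    refine ⟨⟨(x : D), hx⟩, ?_⟩
    show Submodule.Quotient.mk _ = Submodule.Quotient.mk u
    congr 1
    apply Subtype.ext
    show (perpIn B c₁).mkQ (Submodule.inclusion inf_le_left ⟨(x : D), hx⟩) = (u : Reduction B c₁)
    rw [← hxu]
    congr 1
  -- forms
  have hforms : ∀ x y : (I : Submodule ℝ D),
      B₂ (doubleRed B c₁ c₂ B₁ x) (doubleRed B c₁ c₂ B₁ y) = B (x : D) (y : D) := by
    intro x y
    have h := hB₂ (LinearMap.codRestrict (cTwoOne B c₁ c₂)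
      ((perpIn B c₁).mkQ.comp (Submodule.inclusion inf_le_left))
      (fun z => Submodule.mem_map_of_mem (by exact z.2)) x)
      (LinearMap.codRestrict (cTwoOne B c₁ c₂)
      ((perpIn B c₁).mkQ.comp (Submodule.inclusion inf_le_left))
      (fun z => Submodule.mem_map_of_mem (by exact z.2)) y)
    refine Eq.trans h ?_
    show B₁ ((perpIn B c₁).mkQ (Submodule.inclusion inf_le_left x))
        ((perpIn B c₁).mkQ (Submodule.inclusion inf_le_left y)) = _
    rw [Submodule.mkQ_apply, Submodule.mkQ_apply, hB₁]
    rfl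
  refine ⟨⟨ha1, ha2', inf_le_right⟩, ⟨hb1, hb2, hb3⟩, hsurj, hker, hforms, ?_⟩
  -- bracket descends
  intro x y x' y' hx hy
  have hdx : ((x : D) - (x' : D)) ∈ B.orthogonal I := by
    have : x - x' ∈ LinearMap.ker (doubleRed B c₁ c₂ B₁) := by
      rw [LinearMap.mem_ker, map_sub, hx, sub_self]
    rw [hker] at this
    exact this
  have hdy : ((y : D) - (y' : D)) ∈ B.orthogonal I := by
    have : y - y' ∈ LinearMap.ker (doubleRed B c₁ c₂ B₁) := by
      rw [LinearMap.mem_ker, map_sub, hy, sub_self]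
    rw [hker] at this
    exact this
  rw [← sub_eq_zero, ← map_sub, ← LinearMap.mem_ker, hker]
  show ⁅(x : D), (y : D)⁆ - ⁅(x' : D), (y' : D)⁆ ∈ B.orthogonal I
  have hx'I : (x' : D) ∈ I := x'.2
  have hyI : (y : D) ∈ I := y.2
  have hdecomp : ⁅(x : D), (y : D)⁆ - ⁅(x' : D), (y' : D)⁆
      = ⁅(x : D) - (x' : D), (y : D)⁆ + ⁅(x' : D), (y : D) - (y' : D)⁆ := by
    rw [sub_lie, lie_sub]; abel
  rw [hdecomp]
  refine add_mem ?_ ?_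
  · have h := lieOrth I hIlie (y : D) hyI _ hdx
    have : ⁅(x : D) - (x' : D), (y : D)⁆ = -⁅(y : D), (x : D) - (x' : D)⁆ :=
      (lie_skew _ _).symm
    rw [this]
    exact neg_mem h
  · exact lieOrth I hIlie (x' : D) hx'I _ hdy
end

section
/- Let 𝔤 be a quadratic Lie algebra and 𝔠 ⊆ 𝔤 a coisotropic Lie subalgebra. Then 𝔩_𝔠 := { (ξ,η) ∈ 𝔤⊕𝔤 : ξ ∈ 𝔠, η ∈ 𝔠, and ξ − η ∈ 𝔠⊥ } is a Lagrangian Lie subalgebra of the quadratic Lie algebra 𝔤̄⊕𝔤, and it is symmetric, i.e. invariant under the involution (ξ,η) ↦ (η,ξ). -/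
/-- The subalgebra `𝔩_𝔠 = {(ξ,η) : ξ,η ∈ 𝔠, ξ − η ∈ 𝔠⊥} ⊆ 𝔤̄ ⊕ 𝔤`. -/
noncomputable def lCois {g : Type*} [LieRing g] [LieAlgebra ℝ g]
    (B : LinearMap.BilinForm ℝ g) (c : LieSubalgebra ℝ g) : Submodule ℝ (g × g) :=
  (c.toSubmodule.comap (LinearMap.fst ℝ g g)) ⊓
    (c.toSubmodule.comap (LinearMap.snd ℝ g g)) ⊓
    ((B.orthogonal c.toSubmodule).comap (LinearMap.fst ℝ g g - LinearMap.snd ℝ g g))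

section Aux

variable {g : Type*} [LieRing g] [LieAlgebra ℝ g]

lemma mem_lCois_iff (B : LinearMap.BilinForm ℝ g) (c : LieSubalgebra ℝ g) (p : g × g) :
    p ∈ lCois B c ↔ p.1 ∈ c ∧ p.2 ∈ c ∧ p.1 - p.2 ∈ B.orthogonal c.toSubmodule := by
  simp [lCois, Submodule.mem_comap, and_assoc]

lemma barSumForm_apply (B : LinearMap.BilinForm ℝ g) (p q : g × g) :
    barSumForm B p q = B p.2 q.2 - B p.1 q.1 := by
  simp [barSumForm]

end Aux

/-- For a quadratic Lie algebra `𝔤` and a coisotropic Lie subalgebra `𝔠 ⊆ 𝔤`,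
`𝔩_𝔠 = {(ξ,η) : ξ,η ∈ 𝔠, ξ − η ∈ 𝔠⊥}` is a Lagrangian Lie subalgebra of `𝔤̄ ⊕ 𝔤`, and it is
symmetric, i.e. invariant under `(ξ,η) ↦ (η,ξ)`. -/
theorem lCois_lagrangian_symmetric
    {g : Type*} [LieRing g] [LieAlgebra ℝ g] [FiniteDimensional ℝ g]
    (B : LinearMap.BilinForm ℝ g) (hsymm : B.IsSymm) (hnondeg : B.Nondegenerate)
    (hinv : ∀ x y z : g, B ⁅x, y⁆ z + B y ⁅x, z⁆ = 0)
    (c : LieSubalgebra ℝ g)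
    (hcois : B.orthogonal c.toSubmodule ≤ c.toSubmodule) :
    -- `𝔩_𝔠` is a Lie subalgebra of `𝔤̄ ⊕ 𝔤` (closed under the componentwise bracket),
    (∀ p ∈ lCois B c, ∀ q ∈ lCois B c, ⁅p, q⁆ ∈ lCois B c) ∧
    -- it is Lagrangian,
    (barSumForm B).orthogonal (lCois B c) = lCois B c ∧
    -- and it is symmetric.
    (∀ p : g × g, p ∈ lCois B c → (p.2, p.1) ∈ lCois B c) := by
  set K := B.orthogonal c.toSubmodule with hK
  have hs : ∀ x y : g, B x y = B y x := fun x y => by simpa using hsymm.eq x y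
  -- `[c, K] ⊆ K`
  have hbrK : ∀ a ∈ c, ∀ b ∈ K, ⁅a, b⁆ ∈ K := by
    intro a ha b hb n hn
    have hsb : B b ⁅a, n⁆ = 0 := by rw [hs]; exact hb _ (c.lie_mem ha hn)
    have h2 : B ⁅a, b⁆ n = 0 := by linarith [hinv a b n]
    show B n ⁅a, b⁆ = 0
    rw [hs]; exact h2
  have hbrK' : ∀ b ∈ K, ∀ a ∈ c, ⁅b, a⁆ ∈ K := by
    intro b hb a ha
    rw [← lie_skew b a]
    exact K.neg_mem (hbrK a ha b hb)
  refine ⟨?_, ?_, ?_⟩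
  · -- bracket closure
    intro p hp q hq
    rw [mem_lCois_iff] at hp hq ⊢
    obtain ⟨hp1, hp2, hpK⟩ := hp
    obtain ⟨hq1, hq2, hqK⟩ := hq
    refine ⟨c.lie_mem hp1 hq1, c.lie_mem hp2 hq2, ?_⟩
    have h : (⁅p, q⁆ : g × g).1 - (⁅p, q⁆ : g × g).2 =
        ⁅p.1 - p.2, q.1⁆ + ⁅p.2, q.1 - q.2⁆ := by
      show ⁅p.1, q.1⁆ - ⁅p.2, q.2⁆ = _
      rw [sub_lie, lie_sub]; abel
    rw [h]
    exact K.add_mem (hbrK' _ hpK _ hq1) (hbrK _ hp2 _ hqK)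
  · -- Lagrangian
    apply le_antisymm
    · intro p hp
      rw [LinearMap.BilinForm.mem_orthogonal_iff] at hp
      have hdiff : p.1 - p.2 ∈ K := by
        intro n hn
        have h := hp (n, n) ((mem_lCois_iff B c _).mpr ⟨hn, hn, by simp⟩)
        rw [barSumForm_apply] at h
        show B n (p.1 - p.2) = 0
        rw [map_sub]
        linarith
      have h1 : p.1 ∈ c := by
        have hmem : p.1 ∈ B.orthogonal K := by
          intro ζ hζ
          have h := hp (ζ, 0)
            ((mem_lCois_iff B c _).mpr ⟨hcois hζ, c.zero_mem, by rw [sub_zero]; exact hζ⟩)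
          rw [barSumForm_apply] at h
          show B ζ p.1 = 0
          simp only [map_zero, LinearMap.zero_apply] at h
          linarith
        rw [hK, B.orthogonal_orthogonal hnondeg hsymm.isRefl] at hmem
        exact hmem
      refine (mem_lCois_iff B c p).mpr ⟨h1, ?_, hdiff⟩
      have h2 : p.2 = p.1 - (p.1 - p.2) := by abel
      rw [h2]
      exact c.toSubmodule.sub_mem h1 (hcois hdiff)
    · intro q hq
      rw [LinearMap.BilinForm.mem_orthogonal_iff]
      intro p hp
      rw [mem_lCois_iff] at hp hq
      obtain ⟨hp1, hp2, hpK⟩ := hp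
      obtain ⟨hq1, hq2, hqK⟩ := hq
      show barSumForm B p q = 0
      rw [barSumForm_apply]
      have a1 : B p.1 q.1 - B p.1 q.2 = 0 := by
        have h := hqK p.1 hp1
        rwa [map_sub] at h
      have a2 : B q.2 p.1 - B q.2 p.2 = 0 := by
        have h := hpK q.2 hq2
        rwa [map_sub] at h
      have s1 : B p.1 q.2 = B q.2 p.1 := hs _ _
      have s2 : B q.2 p.2 = B p.2 q.2 := hs _ _
      linarith
  · -- symmetric
    intro p hp
    rw [mem_lCois_iff] at hp ⊢
    obtain ⟨h1, h2, h3⟩ := hp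
    refine ⟨h2, h1, ?_⟩
    have h : (p.2 : g) - p.1 = -(p.1 - p.2) := by abel
    rw [h]
    exact K.neg_mem h3
end
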